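/- arXiv:1202.3367 — 2 statements merged into one kernel-verified Lean document; each statement's English description precedes it below -/
import Mathlib

section
/- Let P be symmetric positive definite, B a real matrix, L = BᵀP⁻¹B, and d in the column space of L. Define f* = P⁻¹B L⁺ d. Then for any flow f satisfying Bᵀf = d, we have fᵀPf ≥ (f*)ᵀP f*. In other words, f* minimizes the quadratic energy among all flows meeting the demands. -/
open Matrix

/-- For `L = Bᵀ P⁻¹ B` with `P` symmetric positive definite, `Lp` the
Moore–Penrose pseudoinverse of `L`, and `d` in the column space of `L`,
the flow `f* = P⁻¹ B L⁺ d` minimizes the energy `fᵀ P f` among all flows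
satisfying `Bᵀ f = d`. -/
theorem stmt7 {a b : Type*} [Fintype a] [Fintype b] [DecidableEq a] [DecidableEq b]
    (P : Matrix a a ℝ) (hP : P.PosDef) (B : Matrix a b ℝ)
    (L : Matrix b b ℝ) (hL : L = Bᵀ * P⁻¹ * B)
    (Lp : Matrix b b ℝ)
    (hmp1 : L * Lp * L = L) (hmp2 : Lp * L * Lp = Lp)
    (hmp3 : (L * Lp)ᵀ = L * Lp) (hmp4 : (Lp * L)ᵀ = Lp * L)
    (d : b → ℝ) (hd : L *ᵥ (Lp *ᵥ d) = d)
    (f : a → ℝ) (hf : Bᵀ *ᵥ f = d) :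
    (P⁻¹ *ᵥ (B *ᵥ (Lp *ᵥ d))) ⬝ᵥ (P *ᵥ (P⁻¹ *ᵥ (B *ᵥ (Lp *ᵥ d)))) ≤
      f ⬝ᵥ (P *ᵥ f) := by
  have hPdet : IsUnit P.det := isUnit_iff_ne_zero.mpr (ne_of_gt hP.det_pos)
  have hPsymm : Pᵀ = P := by
    have := hP.1.eq
    simpa using this
  set x := Lp *ᵥ d with hx
  set fs := P⁻¹ *ᵥ (B *ᵥ x) with hfs
  have hPfs : P *ᵥ fs = B *ᵥ x := by
    rw [hfs, mulVec_mulVec, Matrix.mul_nonsing_inv P hPdet, one_mulVec]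
  have hBfs : Bᵀ *ᵥ fs = d := by
    rw [hfs, mulVec_mulVec, mulVec_mulVec, ← hL, hd]
  set g := f - fs with hg
  have hBg : Bᵀ *ᵥ g = 0 := by
    rw [hg, mulVec_sub, hf, hBfs, sub_self]
  have hfg : f = fs + g := by rw [hg]; ring
  have hcross : g ⬝ᵥ (P *ᵥ fs) = 0 := by
    rw [hPfs, dotProduct_mulVec, ← mulVec_transpose, hBg, zero_dotProduct]
  have hcross' : fs ⬝ᵥ (P *ᵥ g) = 0 := by
    rw [dotProduct_mulVec, ← mulVec_transpose, hPsymm, dotProduct_comm]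
    exact hcross
  have hgg : 0 ≤ g ⬝ᵥ (P *ᵥ g) := by
    have := hP.posSemidef.dotProduct_mulVec_nonneg g
    simpa using this
  have hexp : f ⬝ᵥ (P *ᵥ f)
      = fs ⬝ᵥ (P *ᵥ fs) + fs ⬝ᵥ (P *ᵥ g) + g ⬝ᵥ (P *ᵥ fs) + g ⬝ᵥ (P *ᵥ g) := by
    rw [hfg, mulVec_add, add_dotProduct, dotProduct_add, dotProduct_add]
    ring
  have : fs ⬝ᵥ (P *ᵥ fs) ≤ f ⬝ᵥ (P *ᵥ f) := by
    rw [hexp, hcross, hcross']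
    linarith
  simpa [hfs, hx] using this
end

section
/- Let f⁽¹⁾, …, f⁽ᴺ⁾ ∈ ℝᵏ be vectors and u > 0 a capacity. Suppose the positive semidefinite matrix inequality (1/u²)·∑_{t=1}^{N} f⁽ᵗ⁾(f⁽ᵗ⁾)ᵀ ⪯ (1+2ε)·∑_{t=0}^{N−1} E_{i(t)} + (εN/k)·I holds, where each E_i is the k×k matrix with a 1 in entry (i,i) and zeros elsewhere, and ε ≥ 0. Then the average flow satisfies ‖(1/(uN))·∑_{t=1}^{N} f⁽ᵗ⁾‖₁ ≤ √(1+3ε). -/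
open Matrix

lemma quadForm_sum {k N : ℕ} (s : Fin k → ℝ) (M : Fin N → Matrix (Fin k) (Fin k) ℝ) :
    s ⬝ᵥ ((∑ t, M t) *ᵥ s) = ∑ t, s ⬝ᵥ (M t *ᵥ s) := by
  have h1 : (∑ t, M t) *ᵥ s = ∑ t, M t *ᵥ s := by
    funext i
    simp only [mulVec, dotProduct, Matrix.sum_apply, Finset.sum_apply, Finset.sum_mul]
    rw [Finset.sum_comm]
  rw [h1]
  simp only [dotProduct, Finset.sum_apply, Finset.mul_sum]
  rw [Finset.sum_comm]

/-- If `(1/u²) ∑_t f⁽ᵗ⁾ (f⁽ᵗ⁾)ᵀ ⪯ (1+2ε) ∑_t E_{i(t)} + (εN/k) I` in the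
Loewner order, then the average flow satisfies
`‖(1/(uN)) ∑_t f⁽ᵗ⁾‖₁ ≤ √(1+3ε)`. -/
theorem stmt10 {k N : ℕ} (hk : 0 < k) (hN : 0 < N)
    (f : Fin N → Fin k → ℝ) (idx : Fin N → Fin k) (u ε : ℝ)
    (hu : 0 < u) (hε : 0 ≤ ε)
    (h : ((1 + 2 * ε) • (∑ t, Matrix.single (idx t) (idx t) (1 : ℝ)) +
          (ε * N / k) • (1 : Matrix (Fin k) (Fin k) ℝ) -
          (u ^ 2)⁻¹ • (∑ t, vecMulVec (f t) (f t))).PosSemidef) :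
    ∑ j, |(u * N)⁻¹ * ∑ t, f t j| ≤ Real.sqrt (1 + 3 * ε) := by
  set s : Fin k → ℝ := fun j => if 0 ≤ ∑ t, f t j then 1 else -1 with hs
  have hs2 : ∀ j, s j * s j = 1 := by
    intro j; by_cases hj : 0 ≤ ∑ t, f t j <;> simp [hs, hj]
  have hsabs : ∀ j, s j * ∑ t, f t j = |∑ t, f t j| := by
    intro j; by_cases hj : 0 ≤ ∑ t, f t j
    · simp [hs, hj, abs_of_nonneg hj]
    · simp only [hs, hj, if_false]
      rw [abs_of_neg (lt_of_not_ge hj)]; ring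
  have hq := h.dotProduct_mulVec_nonneg s
  have hstar : star s = s := by funext j; simp
  rw [hstar, Matrix.sub_mulVec, Matrix.add_mulVec, dotProduct_sub, dotProduct_add,
    Matrix.smul_mulVec, Matrix.smul_mulVec, Matrix.smul_mulVec,
    dotProduct_smul, dotProduct_smul, dotProduct_smul, quadForm_sum, quadForm_sum] at hq
  have e1 : ∀ t, s ⬝ᵥ (Matrix.single (idx t) (idx t) (1:ℝ) *ᵥ s) = 1 := by
    intro t
    have : s ⬝ᵥ (Matrix.single (idx t) (idx t) (1:ℝ) *ᵥ s) = s (idx t) * s (idx t) := by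
      simp [mulVec, dotProduct, Matrix.single, ite_and, Finset.mul_sum,
        Finset.sum_ite_eq]
    rw [this, hs2]
  have e2 : s ⬝ᵥ ((1 : Matrix (Fin k) (Fin k) ℝ) *ᵥ s) = k := by
    simp [Matrix.one_mulVec, dotProduct, hs2]
  have e3 : ∀ t, s ⬝ᵥ (vecMulVec (f t) (f t) *ᵥ s) = (∑ j, s j * f t j)^2 := by
    intro t
    simp only [mulVec, dotProduct, vecMulVec, Matrix.of_apply, Finset.mul_sum, sq,
      Finset.sum_mul]
    rw [Finset.sum_comm]
    refine Finset.sum_congr rfl fun a _ => Finset.sum_congr rfl fun b _ => ?_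
    ring
  simp only [e1, e2, e3, Finset.sum_const, Finset.card_univ, Fintype.card_fin,
    nsmul_eq_mul, mul_one, smul_eq_mul] at hq
  have hkk : (ε * ↑N / ↑k) * ↑k = ε * ↑N := by
    have : (k:ℝ) ≠ 0 := Nat.cast_ne_zero.mpr hk.ne'
    field_simp
  have hu2 : (0:ℝ) < u^2 := by positivity
  have key : ∑ t, (∑ j, s j * f t j)^2 ≤ u^2 * ((1 + 3*ε) * N) := by
    rw [sub_nonneg, hkk] at hq
    rw [← inv_mul_le_iff₀ hu2]
    calc (u^2)⁻¹ * ∑ t, (∑ j, s j * f t j)^2 ≤ (1 + 2*ε) * N + ε * N := hq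
    _ = (1 + 3*ε) * N := by ring
  have cs : (∑ j, |∑ t, f t j|)^2 ≤ N * (u^2 * ((1 + 3*ε) * N)) := by
    have hrw : (∑ j, |∑ t, f t j|) = ∑ t, ∑ j, s j * f t j := by
      rw [Finset.sum_comm]
      refine Finset.sum_congr rfl fun j _ => ?_
      rw [← hsabs j, Finset.mul_sum]
    rw [hrw]
    calc (∑ t, ∑ j, s j * f t j)^2
        ≤ (Finset.univ.card : ℝ) * ∑ t, (∑ j, s j * f t j)^2 := sq_sum_le_card_mul_sum_sq
      _ ≤ N * (u^2 * ((1 + 3*ε) * N)) := by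
          rw [Finset.card_univ, Fintype.card_fin]
          exact mul_le_mul_of_nonneg_left key (by positivity)
  have hNpos : (0:ℝ) < N := by exact_mod_cast hN
  have habs : ∑ j, |(u * N)⁻¹ * ∑ t, f t j| = (u * N)⁻¹ * ∑ j, |∑ t, f t j| := by
    rw [Finset.mul_sum]
    refine Finset.sum_congr rfl fun j _ => ?_
    rw [abs_mul, abs_of_pos (by positivity)]
  rw [habs, Real.le_sqrt (by positivity), mul_pow]
  calc ((u*↑N)⁻¹)^2 * (∑ j, |∑ t, f t j|)^2
      ≤ ((u*↑N)⁻¹)^2 * (N * (u^2 * ((1+3*ε)*N))) :=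
        mul_le_mul_of_nonneg_left cs (by positivity)
    _ = 1 + 3*ε := by field_simp
  linarith
end
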